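/- For every positive integer k, the k-th moment of h exists and is given by the convergent product: lim_{x→∞} (1/x) ∑_{n≤x} h(n)^k = ∏_{p prime, p>2} (1 − 1/p + ((p−1)/(p−2))^k / p). -/

import Mathlib

open Filter Topology

/-- `h n = ∏_{p ∣ n, p odd prime} (p-1)/(p-2)`, with `h n = 1` when `n` has no odd prime
divisor. -/
noncomputable def h (n : ℕ) : ℝ :=
  ∏ p ∈ n.primeFactors.filter (fun p => 2 < p), ((p : ℝ) - 1) / ((p : ℝ) - 2)

open Finset

noncomputable def aa (k p : ℕ) : ℝ := (((p : ℝ) - 1) / ((p : ℝ) - 2)) ^ k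

noncomputable def g (k d : ℕ) : ℝ :=
  if Squarefree d ∧ ¬ 2 ∣ d then ∏ p ∈ d.primeFactors, (aa k p - 1) else 0

lemma g_zero (k : ℕ) : g k 0 = 0 := by simp [g, not_squarefree_zero]

lemma g_one (k : ℕ) : g k 1 = 1 := by norm_num [g, squarefree_one]

lemma g_mul (k : ℕ) {m n : ℕ} (hmn : m.Coprime n) : g k (m * n) = g k m * g k n := by
  by_cases hm : Squarefree m ∧ ¬ 2 ∣ m
  · by_cases hn : Squarefree n ∧ ¬ 2 ∣ n
    · have hsq : Squarefree (m * n) := (Nat.squarefree_mul hmn).2 ⟨hm.1, hn.1⟩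
      have h2 : ¬ 2 ∣ m * n := by
        rw [Nat.Prime.dvd_mul Nat.prime_two]
        push_neg
        exact ⟨hm.2, hn.2⟩
      rw [g, if_pos ⟨hsq, h2⟩, g, if_pos hm, g, if_pos hn,
        Nat.Coprime.primeFactors_mul hmn,
        Finset.prod_union (Nat.Coprime.disjoint_primeFactors hmn)]
    · rw [show g k n = 0 from if_neg hn, mul_zero, g, if_neg]
      rintro ⟨hsq, h2⟩
      exact hn ⟨hsq.of_mul_right, fun hd => h2 (hd.mul_left m)⟩
  · rw [g, if_neg, g, if_neg hm, zero_mul]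
    rintro ⟨hsq, h2⟩
    exact hm ⟨hsq.of_mul_left, fun hd => h2 (hd.mul_right n)⟩

lemma squarefree_prod_primes {t : Finset ℕ} (ht : ∀ p ∈ t, p.Prime) :
    Squarefree (∏ p ∈ t, p) := by
  classical
  induction t using Finset.induction_on with
  | empty => simpa using squarefree_one
  | @insert p s hp ih =>
    rw [Finset.prod_insert hp, Nat.squarefree_mul]
    · exact ⟨(ht p (mem_insert_self _ _)).squarefree,
        ih fun q hq => ht q (mem_insert_of_mem hq)⟩
    · exact Nat.Coprime.prod_right fun q hq =>
        (Nat.coprime_primes (ht p (mem_insert_self _ _))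
          (ht q (mem_insert_of_mem hq))).2 (by rintro rfl; exact hp hq)

lemma hpow_eq (k : ℕ) {n : ℕ} (hn : n ≠ 0) :
    h n ^ k = ∑ d ∈ n.divisors, g k d := by
  classical
  set S := n.primeFactors.filter (fun p => 2 < p) with hS
  have hSprime : ∀ p ∈ S, p.Prime ∧ 2 < p := fun p hp => by
    simp only [hS, mem_filter, Nat.mem_primeFactors] at hp
    exact ⟨hp.1.1, hp.2⟩
  have hgt : ∀ t ∈ S.powerset, g k (∏ p ∈ t, p) = ∏ p ∈ t, (aa k p - 1) := by
    intro t htS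
    rw [mem_powerset] at htS
    have hprime : ∀ p ∈ t, p.Prime := fun p hp => (hSprime p (htS hp)).1
    have hsq : Squarefree (∏ p ∈ t, p) := squarefree_prod_primes hprime
    have h2 : ¬ 2 ∣ ∏ p ∈ t, p := by
      rw [(Nat.Prime.prime Nat.prime_two).dvd_finset_prod_iff]
      rintro ⟨p, hpt, hdvd⟩
      have h1 := ((hprime p hpt).dvd_iff_eq (by norm_num)).1 hdvd
      have h2p := (hSprime p (htS hpt)).2
      omega
    rw [g, if_pos ⟨hsq, h2⟩, Nat.primeFactors_prod hprime]
  have hLHS : h n ^ k = ∑ t ∈ S.powerset, ∏ p ∈ t, (aa k p - 1) := by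
    rw [h, ← Finset.prod_pow]
    have : ∀ p ∈ S, (((p : ℝ) - 1) / ((p : ℝ) - 2)) ^ k = (aa k p - 1) + 1 := by
      intro p _; rw [aa]; ring
    rw [← hS, Finset.prod_congr rfl this, Finset.prod_add]
    simp
  have hinj : ∀ t ∈ S.powerset, ∀ u ∈ S.powerset, (∏ p ∈ t, p) = (∏ p ∈ u, p) → t = u := by
    intro t ht u hu he
    rw [mem_powerset] at ht hu
    have h1 := Nat.primeFactors_prod (fun p hp => (hSprime p (ht hp)).1)
    rw [he, Nat.primeFactors_prod (fun p hp => (hSprime p (hu hp)).1)] at h1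
    exact h1.symm
  have himg : ∑ d ∈ S.powerset.image (fun t => ∏ p ∈ t, p), g k d
      = ∑ t ∈ S.powerset, g k (∏ p ∈ t, p) := Finset.sum_image hinj
  have hsub : S.powerset.image (fun t => ∏ p ∈ t, p) ⊆ n.divisors := by
    intro d hd
    simp only [mem_image] at hd
    obtain ⟨t, ht, rfl⟩ := hd
    rw [mem_powerset] at ht
    rw [Nat.mem_divisors]
    exact ⟨dvd_trans (Finset.prod_dvd_prod_of_subset _ _ _
      (ht.trans (filter_subset _ _))) (Nat.prod_primeFactors_dvd n), hn⟩
  have hvanish : ∀ d ∈ n.divisors, d ∉ S.powerset.image (fun t => ∏ p ∈ t, p) → g k d = 0 := by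
    intro d hd hnd
    by_contra hne
    have hcond : Squarefree d ∧ ¬ 2 ∣ d := by
      by_contra hc; rw [g, if_neg hc] at hne; exact hne rfl
    apply hnd
    rw [mem_image]
    refine ⟨d.primeFactors, ?_, Nat.prod_primeFactors_of_squarefree hcond.1⟩
    rw [mem_powerset, hS]
    intro p hp
    rw [Nat.mem_primeFactors] at hp
    have hdn : d ∣ n := (Nat.mem_divisors.1 hd).1
    have hp2 : p ≠ 2 := by rintro rfl; exact hcond.2 hp.2.1
    rw [mem_filter, Nat.mem_primeFactors]
    exact ⟨⟨hp.1, hp.2.1.trans hdn, hn⟩, lt_of_le_of_ne hp.1.two_le (Ne.symm hp2)⟩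
  rw [hLHS, ← Finset.sum_congr rfl hgt, ← himg, Finset.sum_subset hsub hvanish]

lemma sum_Icc_eq (k x : ℕ) :
    ∑ n ∈ Icc 1 x, h n ^ k = ∑ d ∈ Icc 1 x, g k d * ((x / d : ℕ) : ℝ) := by
  classical
  have hstep : ∀ n ∈ Icc 1 x, h n ^ k = ∑ d ∈ Icc 1 x, if d ∣ n then g k d else 0 := by
    intro n hn
    rw [mem_Icc] at hn
    have hn0 : n ≠ 0 := by omega
    rw [hpow_eq k hn0, ← Finset.sum_filter]
    apply Finset.sum_congr _ (fun _ _ => rfl)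
    ext d
    simp only [Nat.mem_divisors, mem_filter, mem_Icc]
    constructor
    · rintro ⟨hdn, -⟩
      have hd0 : d ≠ 0 := by
        rintro rfl; rw [zero_dvd_iff] at hdn; omega
      exact ⟨⟨Nat.one_le_iff_ne_zero.2 hd0, (Nat.le_of_dvd (by omega) hdn).trans hn.2⟩, hdn⟩
    · rintro ⟨-, hdn⟩; exact ⟨hdn, hn0⟩
  rw [Finset.sum_congr rfl hstep, Finset.sum_comm]
  refine Finset.sum_congr rfl fun d hd => ?_
  rw [← Finset.sum_filter, Finset.sum_const, nsmul_eq_mul, mul_comm]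
  congr 1
  have : Icc 1 x = Ioc 0 x := (Finset.Icc_add_one_left_eq_Ioc 0 x)
  rw [this]
  exact_mod_cast congrArg (Nat.cast : ℕ → ℝ) (Nat.Ioc_filter_dvd_card_eq_div x d)

lemma pow_sub_one_le {r : ℝ} (h1 : 1 ≤ r) (h2 : r ≤ 2) (j : ℕ) :
    r ^ j - 1 ≤ (j : ℝ) * 2 ^ j * (r - 1) := by
  induction j with
  | zero => norm_num
  | succ j ih =>
    have hr0 : 0 ≤ r := by linarith
    have h2j : (0:ℝ) ≤ 2 ^ j := by positivity
    have hj0 : (0:ℝ) ≤ j := Nat.cast_nonneg j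
    have hrj : r ^ j ≤ 2 ^ j := pow_le_pow_left₀ hr0 h2 j
    have key : r ^ (j+1) - 1 = r * (r ^ j - 1) + (r - 1) := by ring
    have hpow1 : (1:ℝ) ≤ r ^ j := one_le_pow₀ h1
    have s1 : r * (r ^ j - 1) ≤ 2 * ((j:ℝ) * 2 ^ j * (r - 1)) := by nlinarith
    have s2 : (1:ℝ) ≤ 2 ^ j := one_le_pow₀ (by norm_num)
    rw [key, pow_succ]
    push_cast
    nlinarith [s1, mul_nonneg (show (0:ℝ) ≤ 2 * 2 ^ j - 1 by nlinarith)
      (show (0:ℝ) ≤ r - 1 by linarith)]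

lemma aa_sub_one_bound (k : ℕ) {p : ℕ} (hp : 2 < p) :
    0 ≤ aa k p - 1 ∧ aa k p - 1 ≤ (3 * k * 2 ^ k : ℝ) / p := by
  have hp3 : (3:ℝ) ≤ (p:ℝ) := by exact_mod_cast hp
  have hp2 : (1:ℝ) ≤ (p:ℝ) - 2 := by linarith
  have hp2pos : (0:ℝ) < (p:ℝ) - 2 := by linarith
  have hppos : (0:ℝ) < (p:ℝ) := by linarith
  set r : ℝ := ((p:ℝ) - 1) / ((p:ℝ) - 2) with hr
  have h1 : 1 ≤ r := by
    rw [hr, le_div_iff₀ hp2pos]; linarith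
  have h2 : r ≤ 2 := by
    rw [hr, div_le_iff₀ hp2pos]; linarith
  constructor
  · simp only [aa]; linarith [one_le_pow₀ h1 (n := k)]
  · have hb := pow_sub_one_le h1 h2 k
    have hr1 : r - 1 = 1 / ((p:ℝ) - 2) := by
      rw [hr]; rw [div_sub_one hp2pos.ne']; norm_num
    have hle : 1 / ((p:ℝ) - 2) ≤ 3 / (p:ℝ) := by
      rw [div_le_div_iff₀ hp2pos hppos]; linarith
    have hk2 : (0:ℝ) ≤ (k:ℝ) * 2 ^ k := by positivity
    calc aa k p - 1 = r ^ k - 1 := by rw [aa]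
      _ ≤ (k:ℝ) * 2 ^ k * (r - 1) := hb
      _ ≤ (k:ℝ) * 2 ^ k * (3 / (p:ℝ)) := by
          rw [hr1]; exact mul_le_mul_of_nonneg_left hle hk2
      _ = (3 * k * 2 ^ k : ℝ) / p := by ring

lemma sqrt_prod_eq (s : Finset ℕ) :
    Real.sqrt (∏ p ∈ s, (p : ℝ)) = ∏ p ∈ s, Real.sqrt (p : ℝ) := by
  classical
  induction s using Finset.induction_on with
  | empty => simp
  | @insert p s hp ih =>
    rw [Finset.prod_insert hp, Finset.prod_insert hp,
      Real.sqrt_mul (Nat.cast_nonneg p), ih]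

lemma g_nonneg_and_le (k : ℕ) : ∃ K : ℝ, 0 < K ∧
    ∀ d : ℕ, 0 ≤ g k d ∧ g k d ≤ K / Real.sqrt d := by
  classical
  set C : ℝ := 3 * k * 2 ^ k + 1 with hC
  have hC1 : 1 ≤ C := by
    have : (0:ℝ) ≤ 3 * k * 2 ^ k := by positivity
    rw [hC]; linarith
  have hC0 : 0 ≤ C := by linarith
  set B : ℕ := ⌈C⌉₊ ^ 2 with hB
  have hCB : C ^ 2 ≤ (B : ℝ) := by
    rw [hB]; push_cast
    exact pow_le_pow_left₀ hC0 (Nat.le_ceil C) 2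
  set K : ℝ := C ^ (B + 1) * Real.sqrt (((B:ℝ) + 1) ^ (B + 1)) with hK
  have hKpos : 0 < K := by
    rw [hK]
    apply mul_pos (by positivity)
    apply Real.sqrt_pos.2; positivity
  refine ⟨K, hKpos, fun d => ?_⟩
  by_cases hcond : Squarefree d ∧ ¬ 2 ∣ d
  swap
  · rw [g, if_neg hcond]
    exact ⟨le_refl 0, by positivity⟩
  have hd0 : d ≠ 0 := hcond.1.ne_zero
  set P := d.primeFactors with hP
  have hPp : ∀ p ∈ P, p.Prime ∧ 2 < p := by
    intro p hp
    rw [hP, Nat.mem_primeFactors] at hp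
    have : p ≠ 2 := by rintro rfl; exact hcond.2 hp.2.1
    exact ⟨hp.1, lt_of_le_of_ne hp.1.two_le (Ne.symm this)⟩
  have hgval : g k d = ∏ p ∈ P, (aa k p - 1) := by rw [g, if_pos hcond]
  have hterm : ∀ p ∈ P, 0 ≤ aa k p - 1 ∧ aa k p - 1 ≤ C / p := by
    intro p hp
    obtain ⟨h0, h1⟩ := aa_sub_one_bound k (hPp p hp).2
    have hppos : (0:ℝ) < p := by
      have := (hPp p hp).2; positivity
    refine ⟨h0, h1.trans ?_⟩
    gcongr
    rw [hC]; linarith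
  have hg0 : 0 ≤ g k d := by
    rw [hgval]; exact Finset.prod_nonneg fun p hp => (hterm p hp).1
  refine ⟨hg0, ?_⟩
  have hstep1 : g k d ≤ ∏ p ∈ P, (C / p) := by
    rw [hgval]
    exact Finset.prod_le_prod (fun p hp => (hterm p hp).1) (fun p hp => (hterm p hp).2)
  set P₁ := P.filter (fun p => p ≤ B) with hP₁
  set P₂ := P.filter (fun p => ¬ p ≤ B) with hP₂
  have hsplit : ∏ p ∈ P, (C / (p:ℝ)) = (∏ p ∈ P₁, (C / p)) * ∏ p ∈ P₂, (C / p) :=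
    (Finset.prod_filter_mul_prod_filter_not P _ _).symm
  have hcard : P₁.card ≤ B + 1 := by
    have hsub : P₁ ⊆ Finset.range (B+1) := by
      intro p hp; rw [Finset.mem_range]; rw [hP₁, mem_filter] at hp; omega
    simpa using Finset.card_le_card hsub
  have hb1 : ∏ p ∈ P₁, (C / (p:ℝ)) ≤ C ^ (B + 1) := by
    calc ∏ p ∈ P₁, (C / (p:ℝ)) ≤ ∏ p ∈ P₁, C := by
          apply Finset.prod_le_prod
          · intro p hp; exact div_nonneg hC0 (Nat.cast_nonneg p)
          · intro p hp
            apply div_le_self hC0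
            have h2p := (hPp p (mem_of_mem_filter p hp)).2
            exact_mod_cast by omega
      _ = C ^ P₁.card := Finset.prod_const C
      _ ≤ C ^ (B + 1) := pow_le_pow_right₀ hC1 hcard
  have hb2 : ∀ p ∈ P₂, C / (p:ℝ) ≤ 1 / Real.sqrt p := by
    intro p hp
    rw [hP₂, mem_filter] at hp
    have hpB : B < p := by omega
    have hppos : (0:ℝ) < p := by
      have := (hPp p hp.1).2; positivity
    have hsq : (0:ℝ) < Real.sqrt p := Real.sqrt_pos.2 hppos
    have hCs : C ≤ Real.sqrt p := by
      rw [show C = Real.sqrt (C^2) from (Real.sqrt_sq hC0).symm]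
      apply Real.sqrt_le_sqrt
      calc C^2 ≤ (B:ℝ) := hCB
        _ ≤ (p:ℝ) := by exact_mod_cast hpB.le
    calc C / (p:ℝ) ≤ Real.sqrt p / p := by gcongr
      _ = 1 / Real.sqrt p := by
          rw [div_eq_div_iff hppos.ne' hsq.ne', one_mul, Real.mul_self_sqrt hppos.le]
  have hP2nonneg : ∀ p ∈ P₂, (0:ℝ) ≤ C / p := fun p _ =>
    div_nonneg hC0 (Nat.cast_nonneg p)
  have hb2' : ∏ p ∈ P₂, (C / (p:ℝ)) ≤ ∏ p ∈ P₂, (1 / Real.sqrt p) :=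
    Finset.prod_le_prod hP2nonneg hb2
  have hP2prod : ∏ p ∈ P₂, (1 / Real.sqrt (p:ℝ)) = 1 / Real.sqrt (∏ p ∈ P₂, (p:ℝ)) := by
    rw [sqrt_prod_eq]
    simp [one_div]
  -- relate products to d
  have hMd : (∏ p ∈ P₁, (p:ℝ)) * (∏ p ∈ P₂, (p:ℝ)) = (d:ℝ) := by
    rw [← Nat.cast_prod, ← Nat.cast_prod, ← Nat.cast_mul,
      Finset.prod_filter_mul_prod_filter_not P _ _,
      Nat.prod_primeFactors_of_squarefree hcond.1]
  have hM1pos : (0:ℝ) < ∏ p ∈ P₁, (p:ℝ) := by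
    apply Finset.prod_pos
    intro p hp
    have := (hPp p (mem_of_mem_filter p hp)).2; positivity
  have hM2 : (∏ p ∈ P₂, (p:ℝ)) = (d:ℝ) / ∏ p ∈ P₁, (p:ℝ) := by
    rw [eq_div_iff hM1pos.ne', mul_comm]
    exact hMd
  have hM1le : (∏ p ∈ P₁, (p:ℝ)) ≤ ((B:ℝ) + 1) ^ (B + 1) := by
    calc (∏ p ∈ P₁, (p:ℝ)) ≤ ∏ p ∈ P₁, ((B:ℝ) + 1) := by
          apply Finset.prod_le_prod (fun p _ => Nat.cast_nonneg p)
          intro p hp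
          rw [hP₁, mem_filter] at hp
          exact_mod_cast Nat.le_succ_of_le hp.2
      _ = ((B:ℝ) + 1) ^ P₁.card := Finset.prod_const _
      _ ≤ ((B:ℝ) + 1) ^ (B + 1) := by
          exact pow_le_pow_right₀ (le_add_of_nonneg_left (Nat.cast_nonneg B)) hcard
  have hdpos : (0:ℝ) < d := by
    have : 1 ≤ d := Nat.one_le_iff_ne_zero.2 hd0
    exact_mod_cast this
  have htail : 1 / Real.sqrt (∏ p ∈ P₂, (p:ℝ)) ≤
      Real.sqrt (((B:ℝ) + 1) ^ (B + 1)) / Real.sqrt d := by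
    rw [hM2, Real.sqrt_div hdpos.le, one_div_div]
    gcongr
  calc g k d ≤ ∏ p ∈ P, (C / p) := hstep1
    _ = (∏ p ∈ P₁, (C / (p:ℝ))) * ∏ p ∈ P₂, (C / p) := hsplit
    _ ≤ C ^ (B + 1) * (Real.sqrt (((B:ℝ) + 1) ^ (B + 1)) / Real.sqrt d) := by
        apply mul_le_mul hb1 ?_ (Finset.prod_nonneg hP2nonneg) (by positivity)
        exact hb2'.trans (hP2prod.le.trans htail)
    _ = K / Real.sqrt d := by rw [hK, mul_div_assoc]

noncomputable def G (k d : ℕ) : ℝ := g k d / d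

lemma G_nonneg (k d : ℕ) : 0 ≤ G k d := by
  obtain ⟨K, hK, hKb⟩ := g_nonneg_and_le k
  exact div_nonneg (hKb d).1 (Nat.cast_nonneg d)

lemma G_summable_norm (k : ℕ) : Summable (fun d : ℕ => ‖G k d‖) := by
  obtain ⟨K, hK, hKb⟩ := g_nonneg_and_le k
  have hbase : Summable (fun d : ℕ => K * (1 / (d:ℝ) ^ ((3:ℝ)/2))) :=
    (Real.summable_one_div_nat_rpow.2 (by norm_num)).mul_left K
  apply Summable.of_nonneg_of_le (fun d => norm_nonneg _) ?_ hbase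
  intro d
  rcases Nat.eq_zero_or_pos d with rfl | hd
  · simp [G, g_zero]
  have hd1 : (1:ℝ) ≤ d := by exact_mod_cast hd
  have hdpos : (0:ℝ) < d := by linarith
  have hrpow : (d:ℝ) ^ ((3:ℝ)/2) = d * Real.sqrt d := by
    rw [Real.sqrt_eq_rpow, show (3:ℝ)/2 = 1 + 1/2 by norm_num, Real.rpow_add hdpos,
      Real.rpow_one]
  have h1 : g k d / d ≤ (K / Real.sqrt d) / d := by
    gcongr
    exact (hKb d).2
  calc ‖G k d‖ = g k d / d := by
        rw [Real.norm_eq_abs, abs_of_nonneg (G_nonneg k d), G]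
    _ ≤ (K / Real.sqrt d) / d := h1
    _ = K * (1 / (d:ℝ) ^ ((3:ℝ)/2)) := by
        rw [hrpow, div_div, mul_one_div, mul_comm (Real.sqrt (d:ℝ)) (d:ℝ)]

lemma G_summable (k : ℕ) : Summable (G k) :=
  (G_summable_norm k).of_norm

lemma G_euler (k : ℕ) :
    HasProd (fun p : Nat.Primes => ∑' e : ℕ, G k ((p:ℕ) ^ e)) (∑' n, G k n) := by
  apply EulerProduct.eulerProduct_hasProd
  · rw [G, g_one]; norm_num
  · intro m n hmn
    rw [G, G, G, g_mul k hmn, Nat.cast_mul, div_mul_div_comm]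
  · exact G_summable_norm k
  · rw [G, g_zero]; norm_num

lemma G_factor (k : ℕ) {p : ℕ} (hp : p.Prime) :
    ∑' e : ℕ, G k (p ^ e) = if 2 < p then 1 - 1/(p:ℝ) + aa k p / p else 1 := by
  have hppos : (0:ℝ) < p := by exact_mod_cast hp.pos
  have hvan : ∀ e : ℕ, e ∉ ({0, 1} : Finset ℕ) → G k (p ^ e) = 0 := by
    intro e he
    simp only [Finset.mem_insert, Finset.mem_singleton] at he
    have h2e : 2 ≤ e := by omega
    have hnsq : ¬ Squarefree (p ^ e) := by
      intro hsq
      have hdvd : p * p ∣ p ^ e := by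
        rw [← sq]
        exact pow_dvd_pow p h2e
      exact hp.one_lt.ne' (Nat.isUnit_iff.1 (hsq p hdvd))
    rw [G, g, if_neg (fun hc => hnsq hc.1), zero_div]
  rw [tsum_eq_sum hvan]
  rw [show ({0, 1} : Finset ℕ) = insert 0 {1} from rfl, Finset.sum_insert (by norm_num),
    Finset.sum_singleton, pow_zero, pow_one]
  have hG1 : G k 1 = 1 := by rw [G, g_one]; norm_num
  rw [hG1]
  by_cases h2 : 2 < p
  · rw [if_pos h2]
    have hp2 : p ≠ 2 := by omega
    have hgp : g k p = aa k p - 1 := by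
      rw [g, if_pos ⟨hp.squarefree, fun hd => hp2 ((Nat.prime_dvd_prime_iff_eq Nat.prime_two hp).1 hd).symm⟩,
        hp.primeFactors, Finset.prod_singleton]
    rw [G, hgp]
    field_simp
    ring
  · rw [if_neg h2]
    have hp2 : p = 2 := by have := hp.two_le; omega
    subst hp2
    have hgp : g k 2 = 0 := by
      rw [g, if_neg]
      rintro ⟨-, hodd⟩
      exact hodd dvd_rfl
    rw [G, hgp, zero_div, add_zero]

lemma hasProd_target (k : ℕ) :
    HasProd (fun p : {p : ℕ // p.Prime ∧ 2 < p} =>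
      1 - 1 / ((p : ℕ) : ℝ) +
        ((((p : ℕ) : ℝ) - 1) / (((p : ℕ) : ℝ) - 2)) ^ k / ((p : ℕ) : ℝ))
      (∑' n, G k n) := by
  classical
  have hprod : HasProd (fun p : Nat.Primes => ∑' e : ℕ, G k ((p:ℕ) ^ e)) (∑' n, G k n) :=
    G_euler k
  set e : {p : ℕ // p.Prime ∧ 2 < p} → Nat.Primes := fun q => ⟨q.1, q.2.1⟩ with he
  have hinj : Function.Injective e := by
    intro a b hab
    have : (e a).val = (e b).val := congrArg Subtype.val hab
    exact Subtype.ext this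
  have hone : ∀ p ∉ Set.range e, (∑' e : ℕ, G k ((p:ℕ) ^ e)) = 1 := by
    intro p hp
    have h2 : ¬ 2 < (p : ℕ) := by
      intro hlt
      exact hp ⟨⟨(p:ℕ), p.2, hlt⟩, rfl⟩
    rw [G_factor k p.2, if_neg h2]
  have hmain := (hinj.hasProd_iff hone).2 hprod
  have hfe : ((fun p : Nat.Primes => ∑' e : ℕ, G k ((p:ℕ) ^ e)) ∘ e) =
      (fun p : {p : ℕ // p.Prime ∧ 2 < p} =>
        1 - 1 / ((p : ℕ) : ℝ) +
          ((((p : ℕ) : ℝ) - 1) / (((p : ℕ) : ℝ) - 2)) ^ k / ((p : ℕ) : ℝ)) := by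
    funext q
    show (∑' e : ℕ, G k ((q:ℕ) ^ e)) = _
    rw [G_factor k q.2.1, if_pos q.2.2, aa]
  rwa [hfe] at hmain

lemma sum_inv_sqrt_le (x : ℕ) :
    ∑ d ∈ Icc 1 x, 1 / Real.sqrt d ≤ 2 * Real.sqrt x := by
  induction x with
  | zero => simp
  | succ x ih =>
    rw [Finset.sum_Icc_succ_top (by omega : 1 ≤ x + 1)]
    have hx0 : (0:ℝ) ≤ x := Nat.cast_nonneg x
    have hx1 : (0:ℝ) < (x:ℝ) + 1 := by linarith
    set s := Real.sqrt x with hs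
    set t := Real.sqrt ((x:ℝ) + 1) with ht
    have hts : (0:ℝ) ≤ s := Real.sqrt_nonneg _
    have htpos : (0:ℝ) < t := Real.sqrt_pos.2 hx1
    have hs2 : s ^ 2 = x := Real.sq_sqrt hx0
    have ht2 : t ^ 2 = (x:ℝ) + 1 := Real.sq_sqrt hx1.le
    have hcast : ((x + 1 : ℕ) : ℝ) = (x:ℝ) + 1 := by push_cast; ring
    have h1t : 1 / t ≤ 2 * t - 2 * s := by
      rw [div_le_iff₀ htpos]
      nlinarith [sq_nonneg (t - s)]
    calc (∑ d ∈ Icc 1 x, 1 / Real.sqrt d) + 1 / Real.sqrt ((x+1 : ℕ):ℝ)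
        ≤ 2 * s + 1 / t := by
          rw [hcast, ← ht]; exact add_le_add ih le_rfl
      _ ≤ 2 * t := by linarith
      _ = 2 * Real.sqrt ((x+1 : ℕ):ℝ) := by rw [ht, hcast]

lemma sqrt_nat_tendsto : Tendsto (fun x : ℕ => Real.sqrt x) atTop atTop := by
  rw [tendsto_atTop_atTop]
  intro b
  refine ⟨⌈b^2⌉₊, fun x hx => ?_⟩
  have h1 : b^2 ≤ (x:ℝ) := (Nat.le_ceil _).trans (by exact_mod_cast hx)
  calc b ≤ |b| := le_abs_self b
    _ = Real.sqrt (b^2) := (Real.sqrt_sq_eq_abs b).symm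
    _ ≤ Real.sqrt x := Real.sqrt_le_sqrt h1

lemma main_tendsto (k : ℕ) :
    Tendsto (fun x : ℕ => (1 / (x : ℝ)) * ∑ n ∈ Finset.Icc 1 x, (h n) ^ k) atTop
      (𝓝 (∑' n, G k n)) := by
  classical
  obtain ⟨K, hKpos, hKb⟩ := g_nonneg_and_le k
  set E : ℕ → ℝ := fun x => ∑ d ∈ Icc 1 x, g k d * (((x/d : ℕ) : ℝ)/x - 1/d) with hE
  have hdecomp : ∀ x : ℕ, (1/(x:ℝ)) * ∑ n ∈ Icc 1 x, h n ^ k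
      = (∑ d ∈ Icc 1 x, G k d) + E x := by
    intro x
    rw [sum_Icc_eq k x, Finset.mul_sum, hE, ← Finset.sum_add_distrib]
    refine Finset.sum_congr rfl fun d hd => ?_
    rw [G]
    ring
  have hA : Tendsto (fun x : ℕ => ∑ d ∈ Icc 1 x, G k d) atTop (𝓝 (∑' n, G k n)) := by
    have h1 := (G_summable k).hasSum.tendsto_sum_nat
    have heq : ∀ x : ℕ, ∑ d ∈ Finset.range (x+1), G k d = ∑ d ∈ Icc 1 x, G k d := by
      intro x
      have hins : Finset.range (x+1) = insert 0 (Icc 1 x) := by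
        ext m
        simp only [Finset.mem_range, Finset.mem_insert, mem_Icc]
        omega
      rw [hins, Finset.sum_insert (by simp), show G k 0 = 0 by rw [G, g_zero]; norm_num,
        zero_add]
    have h2 := h1.comp (tendsto_add_atTop_nat 1)
    have h3 : (fun x : ℕ => ∑ d ∈ Icc 1 x, G k d)
        = (fun n => ∑ i ∈ Finset.range n, G k i) ∘ (fun a => a + 1) := by
      funext x; exact (heq x).symm
    rw [h3]; exact h2
  have hEbound : ∀ x : ℕ, ‖E x‖ ≤ 2 * K / Real.sqrt x := by
    intro x
    have hsx : (0:ℝ) ≤ Real.sqrt x := Real.sqrt_nonneg _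
    calc ‖E x‖ ≤ ∑ d ∈ Icc 1 x, ‖g k d * (((x/d : ℕ) : ℝ)/x - 1/d)‖ := norm_sum_le _ _
      _ ≤ ∑ d ∈ Icc 1 x, (K / Real.sqrt d) * (1/x) := by
          apply Finset.sum_le_sum
          intro d hd
          rw [mem_Icc] at hd
          have hd1 : 1 ≤ d := hd.1
          have hdx : d ≤ x := hd.2
          have hx1 : 1 ≤ x := le_trans hd1 hdx
          have hdR : (0:ℝ) < d := by exact_mod_cast hd1
          have hxR : (0:ℝ) < x := by exact_mod_cast hx1
          rw [norm_mul]
          apply mul_le_mul ?_ ?_ (norm_nonneg _) (by positivity)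
          · rw [Real.norm_eq_abs, abs_of_nonneg (hKb d).1]; exact (hKb d).2
          · set q : ℕ := x / d with hq
            have hqle : (q:ℝ) ≤ (x:ℝ)/d := Nat.cast_div_le
            have hlt : (x:ℝ)/d < (q:ℝ) + 1 := by
              rw [div_lt_iff₀ hdR]
              have := Nat.lt_mul_div_succ x (show 0 < d by omega)
              calc (x:ℝ) < ((d * (x/d + 1) : ℕ) : ℝ) := by exact_mod_cast this
                _ = ((q:ℝ) + 1) * d := by push_cast [hq]; ring
            have e1 : (1:ℝ)/d = ((x:ℝ)/d)/x := by
              field_simp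
            rw [Real.norm_eq_abs, e1, ← sub_div, abs_div,
              abs_of_pos hxR, div_le_div_iff₀ hxR hxR]
            have habs : |(q:ℝ) - (x:ℝ)/d| ≤ 1 := by
              rw [abs_le]
              constructor <;> [linarith; linarith]
            exact mul_le_mul_of_nonneg_right habs hxR.le
      _ = (K * (1/x)) * ∑ d ∈ Icc 1 x, 1 / Real.sqrt d := by
          rw [Finset.mul_sum]
          refine Finset.sum_congr rfl fun d hd => ?_
          ring
      _ ≤ (K * (1/x)) * (2 * Real.sqrt x) := by
          apply mul_le_mul_of_nonneg_left (sum_inv_sqrt_le x) (by positivity)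
      _ ≤ 2 * K / Real.sqrt x := by
          rcases Nat.eq_zero_or_pos x with rfl | hx
          · simp
          have hxR : (0:ℝ) < x := by exact_mod_cast hx
          set s := Real.sqrt (x:ℝ) with hs
          have hsxpos : (0:ℝ) < s := Real.sqrt_pos.2 hxR
          have hxx : (x:ℝ) = s * s := (Real.mul_self_sqrt hxR.le).symm
          rw [hxx]
          rw [show K * (1/(s*s)) * (2*s) = 2*K/s from by field_simp]
  have hE0 : Tendsto E atTop (𝓝 0) := by
    apply squeeze_zero_norm hEbound
    have := Filter.Tendsto.div_atTop (tendsto_const_nhds (x := 2*K)) sqrt_nat_tendsto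
    exact this
  have := hA.add hE0
  rw [add_zero] at this
  exact this.congr fun x => (hdecomp x).symm


/-- For every `k ≥ 1`, the `k`-th moment of `h` exists and is given by the convergent
product `∏_{p prime, p > 2} (1 - 1/p + ((p-1)/(p-2))^k / p)`. -/
theorem h_kth_moment (k : ℕ) (hk : 0 < k) :
    Multipliable (fun p : {p : ℕ // p.Prime ∧ 2 < p} =>
      1 - 1 / ((p : ℕ) : ℝ) +
        ((((p : ℕ) : ℝ) - 1) / (((p : ℕ) : ℝ) - 2)) ^ k / ((p : ℕ) : ℝ)) ∧
    Tendsto (fun x : ℕ => (1 / (x : ℝ)) * ∑ n ∈ Finset.Icc 1 x, (h n) ^ k) atTop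
      (𝓝 (∏' p : {p : ℕ // p.Prime ∧ 2 < p},
        (1 - 1 / ((p : ℕ) : ℝ) +
          ((((p : ℕ) : ℝ) - 1) / (((p : ℕ) : ℝ) - 2)) ^ k / ((p : ℕ) : ℝ)))) := by
  have hp := hasProd_target k
  refine ⟨hp.multipliable, ?_⟩
  rw [hp.tprod_eq]
  exact main_tendsto k
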